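/- Let Y ∈ ℝ^d satisfy Y ∈ ri K* where K is the solvency cone of a bid-ask matrix Π (so Y_i > 0 and Y_j/Y_i ∈ ri[1/π^{ji}, π^{ij}] for all i,j). Then for every x ∈ K with x ∉ K ∩ (−K) one has ⟨x, Y⟩ > 0. -/

import Mathlib

open Finset Pointwise RealInnerProductSpace

noncomputable section

abbrev E (d : ℕ) : Type := EuclideanSpace ℝ (Fin d)

def solvencyCone {d : ℕ} (π : Fin d → Fin d → ℝ) : Set (E d) :=
  {x | ∃ (a : Fin d → ℝ) (b : Fin d → Fin d → ℝ),
    (∀ i, 0 ≤ a i) ∧ (∀ i j, 0 ≤ b i j) ∧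
    x = ∑ i, a i • EuclideanSpace.single i (1 : ℝ) +
        ∑ i, ∑ j, b i j •
          (π i j • EuclideanSpace.single i (1 : ℝ) - EuclideanSpace.single j (1 : ℝ))}

def dualCone {d : ℕ} (K : Set (E d)) : Set (E d) :=
  {y | ∀ x ∈ K, 0 ≤ ⟪x, y⟫}

-- extension lemma for intrinsic interior
lemma ri_extend {V : Type*} [NormedAddCommGroup V] [NormedSpace ℝ V] {S : Set V} {Y y : V}
    (hY : Y ∈ intrinsicInterior ℝ S) (hy : y ∈ S) :
    ∃ ε : ℝ, 0 < ε ∧ ε • (Y - y) + Y ∈ S := by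
  obtain ⟨Yh, hint, rfl⟩ := hY
  have hyspan : y ∈ affineSpan ℝ S := subset_affineSpan ℝ S hy
  set f : ℝ → affineSpan ℝ S := fun t =>
    ⟨t • ((Yh : V) - y) + Yh, by
      have := AffineSubspace.smul_vsub_vadd_mem (affineSpan ℝ S) t Yh.2 hyspan Yh.2
      simpa using this⟩ with hf_def
  have hf : Continuous f := by
    apply Continuous.subtype_mk
    continuity
  have h0 : f 0 = Yh := by
    simp [hf_def]
  have hmem : f ⁻¹' interior ((↑) ⁻¹' S : Set (affineSpan ℝ S)) ∈ nhds (0 : ℝ) := by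
    apply hf.continuousAt.preimage_mem_nhds
    exact isOpen_interior.mem_nhds (h0 ▸ hint)
  obtain ⟨δ, hδ, hball⟩ := Metric.mem_nhds_iff.1 hmem
  refine ⟨δ / 2, by positivity, ?_⟩
  have : f (δ / 2) ∈ interior ((↑) ⁻¹' S : Set (affineSpan ℝ S)) := by
    apply hball
    rw [Metric.mem_ball, Real.dist_eq, sub_zero, abs_of_pos (by positivity)]
    linarith
  have := interior_subset this
  simpa [hf_def] using this

section
variable {d : ℕ} {π : Fin d → Fin d → ℝ}

lemma inner_single (i : Fin d) (Y : E d) :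
    ⟪EuclideanSpace.single i (1 : ℝ), Y⟫ = Y i := by
  simp [EuclideanSpace.inner_single_left]

lemma inner_gen (i j : Fin d) (Y : E d) :
    ⟪π i j • EuclideanSpace.single i (1 : ℝ) - EuclideanSpace.single j (1 : ℝ), Y⟫
      = π i j * Y i - Y j := by
  simp [inner_sub_left, real_inner_smul_left, EuclideanSpace.inner_single_left]

lemma single_mem (i : Fin d) : EuclideanSpace.single i (1 : ℝ) ∈ solvencyCone π := by
  refine ⟨fun k => if k = i then 1 else 0, 0, fun k => by positivity, fun _ _ => le_rfl, ?_⟩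
  simp [Finset.sum_ite_eq', ite_smul]

lemma gen_mem (i j : Fin d) :
    π i j • EuclideanSpace.single i (1 : ℝ) - EuclideanSpace.single j (1 : ℝ)
      ∈ solvencyCone π := by
  refine ⟨0, fun p q => if p = i then (if q = j then 1 else 0) else 0,
    fun _ => le_rfl, fun p q => by positivity, ?_⟩
  simp [ite_smul, Finset.sum_ite_eq, Finset.sum_ite_eq']

lemma mem_dual_of (y : E d) (h1 : ∀ k, 0 ≤ y k) (h2 : ∀ i j, y j ≤ π i j * y i) :
    y ∈ dualCone (solvencyCone π) := by
  rintro x ⟨a, b, ha, hb, rfl⟩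
  rw [inner_add_left, sum_inner]
  have e1 : ∀ i ∈ Finset.univ (α := Fin d),
      (0:ℝ) ≤ ⟪a i • EuclideanSpace.single i (1 : ℝ), y⟫ := by
    intro i _
    rw [real_inner_smul_left, inner_single]
    exact mul_nonneg (ha i) (h1 i)
  have e2 : ∀ i ∈ Finset.univ (α := Fin d), (0:ℝ) ≤
      ⟪∑ j, b i j • (π i j • EuclideanSpace.single i (1 : ℝ)
        - EuclideanSpace.single j (1 : ℝ)), y⟫ := by
    intro i _
    rw [sum_inner]
    refine Finset.sum_nonneg fun j _ => ?_
    rw [real_inner_smul_left, inner_gen]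
    exact mul_nonneg (hb i j) (by linarith [h2 i j])
  have := Finset.sum_nonneg e1
  rw [sum_inner] at *
  exact add_nonneg this (Finset.sum_nonneg e2)

def rowVec (π : Fin d → Fin d → ℝ) (c : Fin d) : E d := WithLp.toLp 2 (fun k => π c k)

lemma rowVec_apply (c k : Fin d) : rowVec π c k = π c k := rfl

lemma row_mem_dual (hpos : ∀ i j, 0 < π i j) (htri : ∀ i j k, π i j ≤ π i k * π k j)
    (c : Fin d) : rowVec π c ∈ dualCone (solvencyCone π) := by
  apply mem_dual_of
  · exact fun k => (hpos c k).le
  · intro i j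
    calc π c j ≤ π c i * π i j := htri c j i
    _ = π i j * π c i := mul_comm _ _

end

/-- If Y ∈ ri K*, then ⟨x, Y⟩ > 0 for every x ∈ K not lying in the
lineality space K ∩ (−K). -/
theorem ri_dual_strict_pos {d : ℕ} (π : Fin d → Fin d → ℝ)
    (hpos : ∀ i j, 0 < π i j) (hdiag : ∀ i, π i i = 1)
    (htri : ∀ i j k, π i j ≤ π i k * π k j)
    (Y : E d) (hY : Y ∈ intrinsicInterior ℝ (dualCone (solvencyCone π))) :
    ∀ x ∈ solvencyCone π, x ∉ solvencyCone π ∩ -solvencyCone π → 0 < ⟪x, Y⟫ := by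
  have hYK : Y ∈ dualCone (solvencyCone π) := intrinsicInterior_subset hY
  have hYc : ∀ k, 0 ≤ Y k := fun k => by
    have := hYK _ (single_mem (π := π) k); rwa [inner_single] at this
  have hYg : ∀ i j, Y j ≤ π i j * Y i := fun i j => by
    have := hYK _ (gen_mem (π := π) i j); rw [inner_gen] at this; linarith
  -- coordinates of Y are strictly positive
  have Ypos : ∀ i, 0 < Y i := by
    intro i
    obtain ⟨ε, hε, hz⟩ := ri_extend hY (row_mem_dual hpos htri i)
    have h0 := hz _ (single_mem (π := π) i)
    rw [inner_single] at h0
    have hzi : (ε • (Y - rowVec π i) + Y) i = ε * (Y i - 1) + Y i := by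
      simp [rowVec, PiLp.add_apply, PiLp.smul_apply, PiLp.sub_apply, hdiag i, smul_eq_mul]
    rw [hzi] at h0
    nlinarith
  -- if the inequality for (i,j) is tight, then π i j * π j i = 1
  have heq : ∀ i j, π i j * Y i = Y j → π i j * π j i = 1 := by
    intro i j hij
    obtain ⟨ε, hε, hz⟩ := ri_extend hY (row_mem_dual hpos htri j)
    have h0 := hz _ (gen_mem (π := π) i j)
    rw [inner_gen] at h0
    have hzi : (ε • (Y - rowVec π j) + Y) i = ε * (Y i - π j i) + Y i := by
      simp [rowVec, PiLp.add_apply, PiLp.smul_apply, PiLp.sub_apply, smul_eq_mul]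
    have hzj : (ε • (Y - rowVec π j) + Y) j = ε * (Y j - 1) + Y j := by
      simp [rowVec, PiLp.add_apply, PiLp.smul_apply, PiLp.sub_apply, hdiag j, smul_eq_mul]
    rw [hzi, hzj] at h0
    have htr : 1 ≤ π i j * π j i := by
      have := htri i i j; rwa [hdiag i] at this
    nlinarith
  intro x hx hxn
  have hx0 : 0 ≤ ⟪x, Y⟫ := hYK x hx
  rcases hx0.lt_or_eq with h | h
  · exact h
  exfalso
  apply hxn
  refine ⟨hx, ?_⟩
  obtain ⟨a, b, ha, hb, hxeq⟩ := hx
  have hexp : ⟪x, Y⟫ = ∑ i, a i * Y i + ∑ i, ∑ j, b i j * (π i j * Y i - Y j) := by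
    rw [hxeq, inner_add_left, sum_inner, sum_inner]
    congr 1
    · exact Finset.sum_congr rfl fun i _ => by rw [real_inner_smul_left, inner_single]
    · refine Finset.sum_congr rfl fun i _ => ?_
      rw [sum_inner]
      exact Finset.sum_congr rfl fun j _ => by rw [real_inner_smul_left, inner_gen]
  have hsum0 : ∑ i, a i * Y i + ∑ i, ∑ j, b i j * (π i j * Y i - Y j) = 0 := by
    rw [← hexp, ← h]
  have t1 : ∀ i ∈ Finset.univ (α := Fin d), (0:ℝ) ≤ a i * Y i :=
    fun i _ => mul_nonneg (ha i) (hYc i)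
  have t2 : ∀ i ∈ Finset.univ (α := Fin d), (0:ℝ) ≤ ∑ j, b i j * (π i j * Y i - Y j) :=
    fun i _ => Finset.sum_nonneg fun j _ => mul_nonneg (hb i j) (by linarith [hYg i j])
  have hs1 : ∑ i, a i * Y i = 0 := by
    have h2 := Finset.sum_nonneg t2
    have h1 := Finset.sum_nonneg t1
    linarith
  have hs2 : ∑ i, ∑ j, b i j * (π i j * Y i - Y j) = 0 := by
    have h1 := Finset.sum_nonneg t1
    linarith
  have ha0 : ∀ i, a i = 0 := by
    intro i
    have := (Finset.sum_eq_zero_iff_of_nonneg t1).1 hs1 i (Finset.mem_univ i)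
    have := Ypos i
    nlinarith
  have hb0 : ∀ i j, b i j ≠ 0 → π i j * Y i = Y j := by
    intro i j hbij
    have hrow := (Finset.sum_eq_zero_iff_of_nonneg
      (fun i _ => Finset.sum_nonneg fun j _ =>
        mul_nonneg (hb i j) (by linarith [hYg i j]))).1 hs2 i (Finset.mem_univ i)
    have hterm := (Finset.sum_eq_zero_iff_of_nonneg
      (fun j _ => mul_nonneg (hb i j) (by linarith [hYg i j]))).1 hrow j (Finset.mem_univ j)
    have := hYg i j
    rcases mul_eq_zero.1 hterm with h' | h'
    · exact absurd h' hbij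
    · linarith
  -- show -x ∈ solvencyCone π
  rw [Set.mem_neg]
  refine ⟨0, fun p q => b q p * π q p, fun _ => le_rfl,
    fun p q => mul_nonneg (hb q p) (hpos q p).le, ?_⟩
  have hterm : ∀ i j, (b j i * π j i) •
      (π i j • EuclideanSpace.single i (1:ℝ) - EuclideanSpace.single j (1:ℝ))
      = - (b j i • (π j i • EuclideanSpace.single j (1:ℝ) - EuclideanSpace.single i (1:ℝ))) := by
    intro i j
    rcases eq_or_ne (b j i) 0 with hb' | hb'
    · simp [hb']
    · have h1 : π j i * π i j = 1 := heq j i (hb0 j i hb')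
      match_scalars
      all_goals first | ring1 | linear_combination b j i * h1 | linear_combination (-1 : ℝ) * b j i * h1
  calc -x = - ∑ i, ∑ j, b i j •
        (π i j • EuclideanSpace.single i (1:ℝ) - EuclideanSpace.single j (1:ℝ)) := by
        rw [hxeq]; simp [ha0]
    _ = ∑ i, ∑ j, (b j i * π j i) •
        (π i j • EuclideanSpace.single i (1:ℝ) - EuclideanSpace.single j (1:ℝ)) := by
        rw [← Finset.sum_neg_distrib]
        rw [Finset.sum_comm (s := Finset.univ) (t := Finset.univ)]
        refine Finset.sum_congr rfl fun j _ => ?_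
        rw [← Finset.sum_neg_distrib]
        exact Finset.sum_congr rfl fun i _ => (hterm i j).symm
    _ = 0 + ∑ i, ∑ j, (b j i * π j i) •
        (π i j • EuclideanSpace.single i (1:ℝ) - EuclideanSpace.single j (1:ℝ)) := by
        rw [zero_add]
    _ = ∑ i, (0:ℝ) • EuclideanSpace.single i (1:ℝ) + ∑ i, ∑ j, (b j i * π j i) •
        (π i j • EuclideanSpace.single i (1:ℝ) - EuclideanSpace.single j (1:ℝ)) := by
        simp
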